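/- (Generalized BEST theorem) The number of open Eulerian tours from x_init to x_fin on a connected quasibalanced digraph equals T_{x_fin} · Π_x (d_out(x) − 1 + δ_{x,x_fin})!, where T_{x_fin} is the number of oriented spanning trees rooted at (pointing toward) x_fin. -/

import Mathlib

open scoped Classical

/-- The number of transitions `b → a` along the path `x`. -/
def flux {X : Type*} [DecidableEq X] {N : ℕ} (x : Fin (N + 1) → X) (a b : X) : ℕ :=
  (Finset.univ.filter (fun i : Fin N => x i.succ = a ∧ x i.castSucc = b)).card

/-- The number of oriented spanning trees of the multidigraph `φ` rooted at (pointing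
toward) `r`: a tree is a choice, for each vertex `x ≠ r`, of one outgoing arrow
(encoded by the parent map `t` weighted by the arrow multiplicity `φ (t x) x`) such
that every vertex reaches `r` by iterating `t` (no cycles). -/
noncomputable def treeCount {X : Type*} [Fintype X] [DecidableEq X]
    (φ : X → X → ℕ) (r : X) : ℕ :=
  ∑ t : X → X,
    if (t r = r ∧ ∀ x : X, ∃ n : ℕ, t^[n] x = r) then
      ∏ x ∈ Finset.univ.erase r, φ (t x) x
    else 0

set_option linter.unusedSectionVars false
set_option maxHeartbeats 1000000

namespace BEST
variable {X : Type*} [Fintype X] [DecidableEq X]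

def dout (φ : X → X → ℕ) (x : X) : ℕ := ∑ y, φ y x
def din (φ : X → X → ℕ) (x : X) : ℕ := ∑ y, φ x y

abbrev Ox (φ : X → X → ℕ) (x : X) : Type _ := Σ y : X, Fin (φ y x)

lemma card_Ox (φ : X → X → ℕ) (x : X) : Fintype.card (Ox φ x) = dout φ x := by
  simp [Ox, dout]

section Walk
variable (φ : X → X → ℕ) (ρ : ∀ x : X, Ox φ x ≃ Fin (dout φ x)) (xinit : X)

/-- head of the `k`-th arrow out of `y` (junk value `y` if out of range) -/
noncomputable def hdE (y : X) (k : ℕ) : X :=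
  if h : k < dout φ y then ((ρ y).symm ⟨k, h⟩).1 else y

noncomputable def stepf : X × (X → ℕ) → X × (X → ℕ) := fun s =>
  if h : s.2 s.1 < dout φ s.1
  then (((ρ s.1).symm ⟨s.2 s.1, h⟩).1, Function.update s.2 s.1 (s.2 s.1 + 1))
  else s

noncomputable def gs (n : ℕ) : X × (X → ℕ) := (stepf φ ρ)^[n] (xinit, fun _ => 0)

noncomputable def usedIn (u : X → ℕ) (x : X) : ℕ :=
  ∑ y, ((Finset.range (u y)).filter (fun k => hdE φ ρ y k = x)).card

lemma gs_succ (n : ℕ) : gs φ ρ xinit (n + 1) = stepf φ ρ (gs φ ρ xinit n) :=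
  Function.iterate_succ_apply' _ _ _

lemma gs_zero : gs φ ρ xinit 0 = (xinit, fun _ => 0) := rfl

lemma u_le (n : ℕ) (x : X) : (gs φ ρ xinit n).2 x ≤ dout φ x := by
  induction n with
  | zero => simp [gs_zero]
  | succ n ih =>
    rw [gs_succ, stepf]
    split
    · next h =>
      dsimp only
      rw [Function.update_apply]
      split
      · next hx => subst hx; omega
      · exact ih
    · exact ih

lemma u_mono (n : ℕ) (x : X) : (gs φ ρ xinit n).2 x ≤ (gs φ ρ xinit (n+1)).2 x := by
  rw [gs_succ, stepf]
  split
  · dsimp only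
    rw [Function.update_apply]
    split
    · next hx => subst hx; omega
    · exact le_rfl
  · exact le_rfl

lemma usedIn_update (u : X → ℕ) (v x : X) (h : u v < dout φ v) :
    usedIn φ ρ (Function.update u v (u v + 1)) x =
      usedIn φ ρ u x + (if hdE φ ρ v (u v) = x then 1 else 0) := by
  unfold usedIn
  rw [← Finset.add_sum_erase _ _ (Finset.mem_univ v),
      ← Finset.add_sum_erase _ (fun y => ((Finset.range (u y)).filter
        (fun k => hdE φ ρ y k = x)).card) (Finset.mem_univ v)]
  have h1 : ∀ y ∈ Finset.univ.erase v,
      ((Finset.range (Function.update u v (u v + 1) y)).filter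
        (fun k => hdE φ ρ y k = x)).card =
      ((Finset.range (u y)).filter (fun k => hdE φ ρ y k = x)).card := by
    intro y hy
    rw [Function.update_apply, if_neg (Finset.mem_erase.1 hy).1]
  rw [Finset.sum_congr rfl h1, Function.update_self, Finset.range_add_one,
    Finset.filter_insert]
  split
  · rw [Finset.card_insert_of_notMem (by simp)]; ring
  · ring

lemma balance (n : ℕ) (x : X) :
    ((gs φ ρ xinit n).2 x : ℤ) + (if x = (gs φ ρ xinit n).1 then 1 else 0) =
      usedIn φ ρ (gs φ ρ xinit n).2 x + (if x = xinit then 1 else 0) := by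
  induction n with
  | zero => simp [gs_zero, usedIn]; rfl
  | succ n ih =>
    rw [gs_succ, stepf]
    split
    · next h =>
      dsimp only
      rw [usedIn_update φ ρ _ _ _ h, Function.update_apply]
      have hv : ((ρ (gs φ ρ xinit n).1).symm
          ⟨(gs φ ρ xinit n).2 (gs φ ρ xinit n).1, h⟩).1 =
          hdE φ ρ (gs φ ρ xinit n).1 ((gs φ ρ xinit n).2 (gs φ ρ xinit n).1) := by
        rw [hdE, dif_pos h]
      rw [hv]
      set v := (gs φ ρ xinit n).1 with hv'
      set w := hdE φ ρ v ((gs φ ρ xinit n).2 v) with hw'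
      push_cast
      have hwx : (if w = x then (1:ℤ) else 0) = (if x = w then 1 else 0) := by
        by_cases h' : x = w
        · simp [h']
        · rw [if_neg h', if_neg (fun hh => h' hh.symm)]
      rw [hwx]
      by_cases hxv : x = v
      · subst hxv
        rw [if_pos rfl] at ih ⊢
        split_ifs at ih ⊢ <;> omega
      · rw [if_neg hxv] at ih ⊢
        split_ifs at ih ⊢ <;> omega
    · exact ih

def fib' (φ : X → X → ℕ) (x a : X) : {e : Ox φ x // e.1 = a} ≃ Fin (φ a x) where
  toFun e := e.2 ▸ e.1.2
  invFun k := ⟨⟨a, k⟩, rfl⟩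
  left_inv := by rintro ⟨⟨y, k⟩, h⟩; dsimp at h; subst h; rfl
  right_inv k := rfl

lemma card_fib (y x : X) :
    Fintype.card {e : Ox φ y // e.1 = x} = φ x y := by
  rw [Fintype.card_congr (fib' φ y x), Fintype.card_fin]

lemma count_full (y x : X) :
    ((Finset.range (dout φ y)).filter (fun k => hdE φ ρ y k = x)).card = φ x y := by
  rw [Finset.card_filter, ← Fin.sum_univ_eq_sum_range
    (fun k => if hdE φ ρ y k = x then 1 else 0), ← Finset.card_filter]
  rw [← Fintype.card_subtype]
  have e1 : {i : Fin (dout φ y) // hdE φ ρ y i.1 = x} ≃ {e : Ox φ y // e.1 = x} := by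
    refine Equiv.subtypeEquiv (ρ y).symm (fun i => ?_)
    rw [hdE, dif_pos i.2, Fin.eta]
  rw [Fintype.card_congr e1, Fintype.card_congr (fib' φ y x), Fintype.card_fin]

lemma count_le (y x : X) (m : ℕ) (hm : m ≤ dout φ y) :
    ((Finset.range m).filter (fun k => hdE φ ρ y k = x)).card ≤ φ x y := by
  rw [← count_full φ ρ y x]
  exact Finset.card_le_card (Finset.filter_subset_filter _ (Finset.range_subset_range.2 hm))

lemma usedIn_le_din (u : X → ℕ) (hu : ∀ y, u y ≤ dout φ y) (x : X) :
    usedIn φ ρ u x ≤ din φ x := by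
  rw [usedIn, din]
  exact Finset.sum_le_sum (fun y _ => count_le φ ρ y x (u y) (hu y))

variable (xfin : X)
variable (hq : ∀ a : X, (din φ a : ℤ) - dout φ a =
  (if a = xfin then 1 else 0) - (if a = xinit then 1 else 0))
variable (hne : xinit ≠ xfin)

include hq hne in
lemma stuck_eq_fin (n : ℕ)
    (h : ¬ (gs φ ρ xinit n).2 (gs φ ρ xinit n).1 < dout φ (gs φ ρ xinit n).1) :
    (gs φ ρ xinit n).1 = xfin := by
  set v := (gs φ ρ xinit n).1 with hv
  have h1 := balance φ ρ xinit n v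
  have h2 := usedIn_le_din φ ρ (gs φ ρ xinit n).2 (u_le φ ρ xinit n) v
  have h3 := hq v
  have h4 := u_le φ ρ xinit n v
  have h5 : (gs φ ρ xinit n).2 v = dout φ v := by omega
  rw [if_pos rfl, h5] at h1
  by_contra hvf
  rw [if_neg hvf] at h3
  have h6 : (usedIn φ ρ (gs φ ρ xinit n).2 v : ℤ) ≤ din φ v := by exact_mod_cast h2
  split_ifs at h1 h3 <;> omega


noncomputable def par : X → X := fun x =>
  if x = xfin then xfin
  else if h : 0 < dout φ x then ((ρ x).symm ⟨dout φ x - 1, by omega⟩).1 else x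

lemma par_fin : par φ ρ xfin xfin = xfin := by rw [par, if_pos rfl]

lemma par_ne (w : X) (hw : w ≠ xfin) (hd : 0 < dout φ w) :
    par φ ρ xfin w = hdE φ ρ w (dout φ w - 1) := by
  rw [par, if_neg hw, dif_pos hd, hdE, dif_pos (by omega)]

lemma unused_last (u : X → ℕ) (hu : ∀ y, u y ≤ dout φ y) (w : X) (hw : w ≠ xfin)
    (h : u w < dout φ w) :
    usedIn φ ρ u (par φ ρ xfin w) < din φ (par φ ρ xfin w) := by
  have hd0 : 0 < dout φ w := by omega
  have hpw := par_ne φ ρ xfin w hw hd0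
  set pw := par φ ρ xfin w with hpwdef
  have hmem : dout φ w - 1 ∈ (Finset.range (dout φ w)).filter
      (fun k => hdE φ ρ w k = pw) := by
    rw [Finset.mem_filter, Finset.mem_range]
    exact ⟨by omega, hpw.symm⟩
  have hsub : (Finset.range (u w)).filter (fun k => hdE φ ρ w k = pw) ⊆
      ((Finset.range (dout φ w)).filter (fun k => hdE φ ρ w k = pw)).erase
        (dout φ w - 1) := by
    intro k hk
    rw [Finset.mem_filter, Finset.mem_range] at hk
    rw [Finset.mem_erase, Finset.mem_filter, Finset.mem_range]
    exact ⟨by omega, by omega, hk.2⟩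
  have hlt : ((Finset.range (u w)).filter (fun k => hdE φ ρ w k = pw)).card
      < φ pw w := by
    have h1 := Finset.card_le_card hsub
    rw [Finset.card_erase_of_mem hmem, count_full φ ρ w pw] at h1
    have h2 : 0 < φ pw w := by
      rw [← count_full φ ρ w pw]
      exact Finset.card_pos.2 ⟨_, hmem⟩
    omega
  rw [usedIn, din]
  exact Finset.sum_lt_sum (fun y _ => count_le φ ρ y pw (u y) (hu y))
    ⟨w, Finset.mem_univ w, hlt⟩

include hq hne in
lemma no_unused (n : ℕ)
    (hstuck : ¬ (gs φ ρ xinit n).2 (gs φ ρ xinit n).1 < dout φ (gs φ ρ xinit n).1)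
    (hreach : ∀ x, ∃ k, (par φ ρ xfin)^[k] x = xfin)
    (x0 : X) (hx0 : (gs φ ρ xinit n).2 x0 < dout φ x0) : False := by
  have hu : True := trivial
  have hvf : (gs φ ρ xinit n).1 = xfin := stuck_eq_fin φ ρ xinit xfin hq hne n hstuck
  have hule := u_le φ ρ xinit n
  have hufin : (gs φ ρ xinit n).2 xfin = dout φ xfin := by
    have := hule xfin
    rw [hvf] at hstuck
    omega
  have allin : usedIn φ ρ (gs φ ρ xinit n).2 xfin = din φ xfin := by
    have h1 := balance φ ρ xinit n xfin
    rw [hvf, if_pos rfl, if_neg (Ne.symm hne), hufin] at h1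
    have h3 := hq xfin
    rw [if_pos rfl, if_neg (Ne.symm hne)] at h3
    omega
  have key : ∀ j : ℕ, ∀ x : X, x ≠ xfin → (gs φ ρ xinit n).2 x < dout φ x →
      (par φ ρ xfin)^[j] x = xfin → False := by
    intro j
    induction j with
    | zero => intro x hx _ hit; exact hx hit
    | succ j ih =>
      intro x hx hux hit
      rw [Function.iterate_succ_apply] at hit
      have hlt := unused_last φ ρ xfin (gs φ ρ xinit n).2 hule x hx hux
      by_cases hpf : par φ ρ xfin x = xfin
      · rw [hpf, allin] at hlt; omega
      · apply ih (par φ ρ xfin x) hpf ?_ hit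
        set pw := par φ ρ xfin x
        have h1 := balance φ ρ xinit n pw
        rw [hvf, if_neg hpf] at h1
        have h3 := hq pw
        rw [if_neg hpf] at h3
        have h6 : (usedIn φ ρ (gs φ ρ xinit n).2 pw : ℤ) < din φ pw := by exact_mod_cast hlt
        split_ifs at h1 h3 <;> omega
  have hx0f : x0 ≠ xfin := by intro h; rw [h] at hx0; omega
  obtain ⟨k0, hk0⟩ := hreach x0
  exact key k0 x0 hx0f hx0 hk0

noncomputable def Ntot : ℕ := ∑ x, dout φ x

include hq hne in
lemma progress (hreach : ∀ x, ∃ k, (par φ ρ xfin)^[k] x = xfin) :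
    ∀ n, n ≤ Ntot φ → (∑ x, (gs φ ρ xinit n).2 x = n) ∧
      (n < Ntot φ →
        (gs φ ρ xinit n).2 (gs φ ρ xinit n).1 < dout φ (gs φ ρ xinit n).1) := by
  intro n
  induction n with
  | zero =>
    intro _
    constructor
    · simp [gs_zero]
    · intro hlt
      by_contra hstuck
      have : ∃ x0, (gs φ ρ xinit 0).2 x0 < dout φ x0 := by
        by_contra hall
        push_neg at hall
        have : ∀ x, (gs φ ρ xinit 0).2 x = dout φ x :=
          fun x => le_antisymm (u_le φ ρ xinit 0 x) (hall x)
        have hsum : ∑ x, (gs φ ρ xinit 0).2 x = Ntot φ :=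
          Finset.sum_congr rfl (fun x _ => this x)
        rw [show ∑ x, (gs φ ρ xinit 0).2 x = 0 by simp [gs_zero]] at hsum
        omega
      obtain ⟨x0, hx0⟩ := this
      exact no_unused φ ρ xinit xfin hq hne 0 hstuck hreach x0 hx0
  | succ n ih =>
    intro hn1
    have hn : n ≤ Ntot φ := by omega
    obtain ⟨ihs, ihns⟩ := ih hn
    have hns := ihns (by omega)
    have hsum : ∑ x, (gs φ ρ xinit (n+1)).2 x = n + 1 := by
      rw [gs_succ, stepf, dif_pos hns]
      dsimp only
      rw [Finset.sum_update_of_mem (Finset.mem_univ _),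
        Finset.sdiff_singleton_eq_erase]
      rw [← Finset.add_sum_erase _ _ (Finset.mem_univ (gs φ ρ xinit n).1)] at ihs
      omega
    refine ⟨hsum, fun hlt => ?_⟩
    by_contra hstuck
    have : ∃ x0, (gs φ ρ xinit (n+1)).2 x0 < dout φ x0 := by
      by_contra hall
      push_neg at hall
      have : ∀ x, (gs φ ρ xinit (n+1)).2 x = dout φ x :=
        fun x => le_antisymm (u_le φ ρ xinit (n+1) x) (hall x)
      have hs2 : ∑ x, (gs φ ρ xinit (n+1)).2 x = Ntot φ :=
        Finset.sum_congr rfl (fun x _ => this x)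
      omega
    obtain ⟨x0, hx0⟩ := this
    exact no_unused φ ρ xinit xfin hq hne (n+1) hstuck hreach x0 hx0


lemma u_mono_le (m n : ℕ) (h : m ≤ n) (x : X) :
    (gs φ ρ xinit m).2 x ≤ (gs φ ρ xinit n).2 x := by
  induction n, h using Nat.le_induction with
  | base => exact le_rfl
  | succ n hmn ih => exact le_trans ih (u_mono φ ρ xinit n x)

lemma u_succ_self (n : ℕ)
    (hns : (gs φ ρ xinit n).2 (gs φ ρ xinit n).1 < dout φ (gs φ ρ xinit n).1) :
    (gs φ ρ xinit (n+1)).2 ((gs φ ρ xinit n).1) =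
      (gs φ ρ xinit n).2 ((gs φ ρ xinit n).1) + 1 := by
  rw [gs_succ, stepf, dif_pos hns]
  dsimp only
  rw [Function.update_self]

lemma u_succ_other (n : ℕ) (x : X)
    (hns : (gs φ ρ xinit n).2 (gs φ ρ xinit n).1 < dout φ (gs φ ρ xinit n).1)
    (hx : x ≠ (gs φ ρ xinit n).1) :
    (gs φ ρ xinit (n+1)).2 x = (gs φ ρ xinit n).2 x := by
  rw [gs_succ, stepf, dif_pos hns]
  dsimp only
  rw [Function.update_of_ne hx]

lemma v_succ (n : ℕ)
    (hns : (gs φ ρ xinit n).2 (gs φ ρ xinit n).1 < dout φ (gs φ ρ xinit n).1) :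
    (gs φ ρ xinit (n+1)).1 =
      ((ρ (gs φ ρ xinit n).1).symm ⟨(gs φ ρ xinit n).2 (gs φ ρ xinit n).1, hns⟩).1 := by
  rw [gs_succ, stepf, dif_pos hns]

include hq hne in
lemma all_used (hreach : ∀ x, ∃ k, (par φ ρ xfin)^[k] x = xfin) (x : X) :
    (gs φ ρ xinit (Ntot φ)).2 x = dout φ x := by
  have hsum := (progress φ ρ xinit xfin hq hne hreach (Ntot φ) le_rfl).1
  have hsum2 : ∑ y, (gs φ ρ xinit (Ntot φ)).2 y = ∑ y, dout φ y := by
    rw [hsum]; rfl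
  exact (Finset.sum_eq_sum_iff_of_le
    (fun y (_ : y ∈ Finset.univ) => u_le φ ρ xinit (Ntot φ) y)).1 hsum2 x
      (Finset.mem_univ x)

include hq hne in
lemma v_final (hreach : ∀ x, ∃ k, (par φ ρ xfin)^[k] x = xfin) :
    (gs φ ρ xinit (Ntot φ)).1 = xfin := by
  apply stuck_eq_fin φ ρ xinit xfin hq hne
  rw [all_used φ ρ xinit xfin hq hne hreach]
  omega

include hq hne in
lemma notstuck (hreach : ∀ x, ∃ k, (par φ ρ xfin)^[k] x = xfin) (n : ℕ)
    (hn : n < Ntot φ) :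
    (gs φ ρ xinit n).2 (gs φ ρ xinit n).1 < dout φ (gs φ ρ xinit n).1 :=
  (progress φ ρ xinit xfin hq hne hreach n (by omega)).2 hn

lemma u_strict (m n : ℕ) (hmn : m < n)
    (hns : (gs φ ρ xinit m).2 (gs φ ρ xinit m).1 < dout φ (gs φ ρ xinit m).1) :
    (gs φ ρ xinit m).2 (gs φ ρ xinit m).1 < (gs φ ρ xinit n).2 (gs φ ρ xinit m).1 := by
  have h1 := u_succ_self φ ρ xinit m hns
  have h2 := u_mono_le φ ρ xinit (m+1) n hmn (gs φ ρ xinit m).1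
  omega

/-- the arrow used at step `i` -/
noncomputable def ar (hreach : ∀ x, ∃ k, (par φ ρ xfin)^[k] x = xfin)
    (i : Fin (Ntot φ)) : Σ x : X, Ox φ x :=
  ⟨(gs φ ρ xinit i).1, (ρ (gs φ ρ xinit i).1).symm
    ⟨(gs φ ρ xinit i).2 (gs φ ρ xinit i).1,
      notstuck φ ρ xinit xfin hq hne hreach i i.2⟩⟩

include hq hne in
lemma ar_bij (hreach : ∀ x, ∃ k, (par φ ρ xfin)^[k] x = xfin) :
    Function.Bijective (ar φ ρ xinit xfin hq hne hreach) := by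
  rw [Fintype.bijective_iff_injective_and_card]
  constructor
  · intro i j hij
    by_contra hne'
    have hfst : (gs φ ρ xinit i).1 = (gs φ ρ xinit j).1 := congrArg Sigma.fst hij
    have hsnd := (Sigma.mk.inj_iff.1 hij).2
    -- reduce to u equality
    have key : ∀ m n : Fin (Ntot φ), m.1 < n.1 →
        (gs φ ρ xinit m).1 = (gs φ ρ xinit n).1 →
        ar φ ρ xinit xfin hq hne hreach m ≠ ar φ ρ xinit xfin hq hne hreach n := by
      intro m n hmn hfst' har
      have hu := u_strict φ ρ xinit m n hmn
        (notstuck φ ρ xinit xfin hq hne hreach m m.2)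
      rw [ar, ar] at har
      have h4 := congrArg (fun s : Σ x : X, Ox φ x => ((ρ s.1) s.2 : ℕ)) har
      simp only [Equiv.apply_symm_apply] at h4
      rw [← hfst'] at h4
      omega
    rcases lt_trichotomy i.1 j.1 with h | h | h
    · exact key i j h hfst hij
    · exact hne' (Fin.ext h)
    · exact key j i h hfst.symm hij.symm
  · rw [Fintype.card_fin, Fintype.card_sigma]
    exact (Finset.sum_congr rfl (fun x _ => card_Ox φ x)).symm
-- checkpoint

noncomputable def wp : Fin (Ntot φ + 1) → X := fun i => (gs φ ρ xinit i).1

lemma wp_zero : wp φ ρ xinit 0 = xinit := rfl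

include hq hne in
lemma wp_last (hreach : ∀ x, ∃ k, (par φ ρ xfin)^[k] x = xfin) :
    wp φ ρ xinit (Fin.last (Ntot φ)) = xfin := by
  rw [wp]
  exact v_final φ ρ xinit xfin hq hne hreach

include hq hne in
lemma ar_head (hreach : ∀ x, ∃ k, (par φ ρ xfin)^[k] x = xfin) (i : Fin (Ntot φ)) :
    (ar φ ρ xinit xfin hq hne hreach i).2.1 = (gs φ ρ xinit (i.1 + 1)).1 :=
  (v_succ φ ρ xinit i.1 (notstuck φ ρ xinit xfin hq hne hreach i i.2)).symm

def sigmaFib (b a : X) : {e : Σ x : X, Ox φ x // e.1 = b ∧ e.2.1 = a} ≃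
    {e' : Ox φ b // e'.1 = a} where
  toFun e := ⟨e.2.1 ▸ e.1.2, by
    obtain ⟨⟨x, o⟩, h1, h2⟩ := e
    dsimp only at h1
    subst h1
    exact h2⟩
  invFun o := ⟨⟨b, o.1⟩, rfl, o.2⟩
  left_inv := by rintro ⟨⟨x, o⟩, h1, h2⟩; dsimp only at h1; subst h1; rfl
  right_inv o := rfl

include hq hne in
lemma occ_cond (hreach : ∀ x, ∃ k, (par φ ρ xfin)^[k] x = xfin) (a b : X)
    (i : Fin (Ntot φ)) :
    (wp φ ρ xinit i.succ = a ∧ wp φ ρ xinit i.castSucc = b) ↔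
      ((ar φ ρ xinit xfin hq hne hreach i).1 = b ∧
        (ar φ ρ xinit xfin hq hne hreach i).2.1 = a) := by
  rw [wp, wp, ar_head φ ρ xinit xfin hq hne hreach i]
  have h1 : ((i.succ : Fin (Ntot φ + 1)) : ℕ) = i.1 + 1 := Fin.val_succ i
  have h2 : ((i.castSucc : Fin (Ntot φ + 1)) : ℕ) = i.1 := Fin.coe_castSucc i
  rw [h1, h2]
  exact ⟨fun h => ⟨h.2, h.1⟩, fun h => ⟨h.2, h.1⟩⟩

noncomputable def occEquiv (hreach : ∀ x, ∃ k, (par φ ρ xfin)^[k] x = xfin)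
    (a b : X) :
    {i : Fin (Ntot φ) // wp φ ρ xinit i.succ = a ∧ wp φ ρ xinit i.castSucc = b} ≃
      Fin (φ a b) :=
  ((Equiv.subtypeEquiv (Equiv.ofBijective _ (ar_bij φ ρ xinit xfin hq hne hreach))
    (occ_cond φ ρ xinit xfin hq hne hreach a b)).trans (sigmaFib φ b a)).trans
      (fib' φ b a)

include hq hne in
lemma flux_wp (hreach : ∀ x, ∃ k, (par φ ρ xfin)^[k] x = xfin) (a b : X) :
    flux (wp φ ρ xinit) a b = φ a b := by
  rw [flux, ← Fintype.card_subtype,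
    Fintype.card_congr (occEquiv φ ρ xinit xfin hq hne hreach a b), Fintype.card_fin]

include hq hne in
lemma u_count (hreach : ∀ x, ∃ k, (par φ ρ xfin)^[k] x = xfin) (n : ℕ)
    (hn : n ≤ Ntot φ) (x : X) :
    (gs φ ρ xinit n).2 x =
      ((Finset.range n).filter (fun j => (gs φ ρ xinit j).1 = x)).card := by
  induction n with
  | zero => simp [gs_zero]
  | succ n ih =>
    have hns := notstuck φ ρ xinit xfin hq hne hreach n (by omega)
    rw [Finset.range_add_one, Finset.filter_insert]
    by_cases hx : x = (gs φ ρ xinit n).1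
    · rw [if_pos hx.symm, Finset.card_insert_of_notMem (by simp),
        ← ih (by omega), hx, u_succ_self φ ρ xinit n hns]
    · rw [if_neg (fun hh => hx hh.symm), ← ih (by omega),
        u_succ_other φ ρ xinit n x hns hx]
end Walk

section Glue
variable {X : Type*} [Fintype X] [DecidableEq X]
variable (φ : X → X → ℕ) (xinit xfin : X)

abbrev US : Type _ :=
  {ρ : ∀ x : X, Ox φ x ≃ Fin (dout φ x) // ∀ x, ∃ k, (par φ ρ xfin)^[k] x = xfin}

abbrev AS : Type _ :=
  {p : Fin (Ntot φ + 1) → X //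
    p 0 = xinit ∧ p (Fin.last _) = xfin ∧ ∀ a b, flux p a b = φ a b}

abbrev SS : Type _ :=
  Σ p : AS φ xinit xfin, ∀ a b : X,
    ({i : Fin (Ntot φ) // p.1 i.succ = a ∧ p.1 i.castSucc = b} ≃ Fin (φ a b))

variable (hq : ∀ a : X, (din φ a : ℤ) - dout φ a =
  (if a = xfin then 1 else 0) - (if a = xinit then 1 else 0))
variable (hne : xinit ≠ xfin)

noncomputable def Gmap (r : US φ xfin) : SS φ xinit xfin :=
  ⟨⟨wp φ r.1 xinit, wp_zero φ r.1 xinit,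
    wp_last φ r.1 xinit xfin hq hne r.2, flux_wp φ r.1 xinit xfin hq hne r.2⟩,
    fun a b => occEquiv φ r.1 xinit xfin hq hne r.2 a b⟩

include hq hne in
lemma gmap_inj : Function.Injective (Gmap φ xinit xfin hq hne) := by
  intro r r' h
  have hp : wp φ r.1 xinit = wp φ r'.1 xinit :=
    congrArg (fun s : SS φ xinit xfin => s.1.1) h
  have hveq : ∀ n, n ≤ Ntot φ → (gs φ r.1 xinit n).1 = (gs φ r'.1 xinit n).1 := by
    intro n hn
    have := congrFun hp ⟨n, by omega⟩
    exact this
  have hueq : ∀ n, n ≤ Ntot φ → ∀ x,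
      (gs φ r.1 xinit n).2 x = (gs φ r'.1 xinit n).2 x := by
    intro n hn x
    rw [u_count φ r.1 xinit xfin hq hne r.2 n hn x,
      u_count φ r'.1 xinit xfin hq hne r'.2 n hn x]
    congr 1
    apply Finset.filter_congr
    intro j hj
    rw [Finset.mem_range] at hj
    rw [hveq j (by omega)]
  -- arrows coincide
  have haru : ∀ i : Fin (Ntot φ),
      ar φ r.1 xinit xfin hq hne r.2 i = ar φ r'.1 xinit xfin hq hne r'.2 i := by
    intro i
    set a := wp φ r.1 xinit i.succ with ha
    set b := wp φ r.1 xinit i.castSucc with hb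
    have hF := congrFun (congrArg (fun s : SS φ xinit xfin =>
      fun j : Fin (Ntot φ) =>
        if hc : (s.1.1 j.succ = a ∧ s.1.1 j.castSucc = b) then (s.2 a b ⟨j, hc⟩).1
        else 0) h) i
    have hc1 : (Gmap φ xinit xfin hq hne r).1.1 i.succ = a ∧
        (Gmap φ xinit xfin hq hne r).1.1 i.castSucc = b := ⟨rfl, rfl⟩
    have hc2 : (Gmap φ xinit xfin hq hne r').1.1 i.succ = a ∧
        (Gmap φ xinit xfin hq hne r').1.1 i.castSucc = b := by
      constructor
      · show wp φ r'.1 xinit i.succ = a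
        rw [← hp]
      · show wp φ r'.1 xinit i.castSucc = b
        rw [← hp]
    rw [dif_pos hc1, dif_pos hc2] at hF
    -- hF : values of occEquiv agree
    have hval : (occEquiv φ r.1 xinit xfin hq hne r.2 a b ⟨i, hc1⟩).1 =
        (occEquiv φ r'.1 xinit xfin hq hne r'.2 a b ⟨i, hc2⟩).1 := hF
    have heq2 : (occEquiv φ r.1 xinit xfin hq hne r.2 a b ⟨i, hc1⟩) =
        (occEquiv φ r'.1 xinit xfin hq hne r'.2 a b ⟨i, hc2⟩) := Fin.ext hval
    -- unfold occEquiv: both are fib' (sigmaFib ⟨ar _, _⟩)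
    have h3 : (fib' φ b a) ((sigmaFib φ b a)
        ⟨ar φ r.1 xinit xfin hq hne r.2 i,
          (occ_cond φ r.1 xinit xfin hq hne r.2 a b i).1 hc1⟩) =
        (fib' φ b a) ((sigmaFib φ b a)
        ⟨ar φ r'.1 xinit xfin hq hne r'.2 i,
          (occ_cond φ r'.1 xinit xfin hq hne r'.2 a b i).1 hc2⟩) := heq2
    have h4 := (sigmaFib φ b a).injective ((fib' φ b a).injective h3)
    exact Subtype.ext_iff.1 h4
  -- conclude ρ = ρ'
  apply Subtype.ext
  funext x
  apply Equiv.ext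
  intro e
  obtain ⟨i, hi⟩ := (ar_bij φ r.1 xinit xfin hq hne r.2).2 ⟨x, e⟩
  have hi' : ar φ r'.1 xinit xfin hq hne r'.2 i = ⟨x, e⟩ := by rw [← haru i]; exact hi
  have hv1 := congrArg (fun s : Σ z : X, Ox φ z => ((r.1 s.1) s.2 : ℕ)) hi
  have hv2 := congrArg (fun s : Σ z : X, Ox φ z => ((r'.1 s.1) s.2 : ℕ)) hi'
  rw [ar] at hv1 hv2
  simp only [Equiv.apply_symm_apply] at hv1 hv2
  have hv3 : (gs φ r'.1 xinit i).1 = (gs φ r.1 xinit i).1 := (hveq i (by omega)).symm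
  rw [hv3, ← hueq i (by omega)] at hv2
  exact Fin.ext (by omega)

section Forward
variable {p : Fin (Ntot φ + 1) → X}
variable (hpf : ∀ a b, flux p a b = φ a b)
variable (ℓ : ∀ a b : X,
  ({i : Fin (Ntot φ) // p i.succ = a ∧ p i.castSucc = b} ≃ Fin (φ a b)))

noncomputable def cntp (n : ℕ) (x : X) : ℕ :=
  (Finset.univ.filter (fun j : Fin (Ntot φ) => j.1 < n ∧ p j.castSucc = x)).card

include hpf in
lemma card_Dfin (x : X) :
    (Finset.univ.filter (fun j : Fin (Ntot φ) => p j.castSucc = x)).card =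
      dout φ x := by
  rw [Finset.card_eq_sum_card_fiberwise
    (f := fun i => p i.succ) (t := Finset.univ) (fun _ _ => Finset.mem_univ _)]
  rw [dout]
  apply Finset.sum_congr rfl
  intro y _
  rw [← hpf y x, flux, Finset.filter_filter]
  congr 1
  apply Finset.filter_congr
  intro j _
  exact ⟨fun h => ⟨h.2, h.1⟩, fun h => ⟨h.2, h.1⟩⟩

include hpf in
lemma cntp_lt {x : X} (i : Fin (Ntot φ)) (hi : p i.castSucc = x) :
    cntp φ (p := p) i.1 x < dout φ x := by
  rw [← card_Dfin φ hpf x, cntp]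
  apply Finset.card_lt_card
  rw [Finset.ssubset_iff_of_subset
    (Finset.filter_subset_filter _ (fun j hj => hj) |>.trans ?_)]
  · exact ⟨i, by simp [hi], by simp⟩
  · intro j hj
    rw [Finset.mem_filter] at hj ⊢
    exact ⟨hj.1, hj.2.2⟩

include hpf in
lemma cntp_mono_strict {x : X} (i : Fin (Ntot φ)) (hi : p i.castSucc = x)
    {n : ℕ} (hn : i.1 < n) : cntp φ (p := p) i.1 x < cntp φ (p := p) n x := by
  rw [cntp, cntp]
  apply Finset.card_lt_card
  rw [Finset.ssubset_iff_of_subset (Finset.filter_subset_filter _ (fun j hj => hj) |>.trans ?_)]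
  · exact ⟨i, by simp [hi, hn], by simp⟩
  · intro j hj
    rw [Finset.mem_filter] at hj ⊢
    exact ⟨hj.1, by omega, hj.2.2⟩

lemma cntp_succ (n : ℕ) (hn : n < Ntot φ) (x : X) :
    cntp φ (p := p) (n+1) x = cntp φ (p := p) n x +
      if p (⟨n, hn⟩ : Fin (Ntot φ)).castSucc = x then 1 else 0 := by
  rw [cntp, cntp]
  by_cases hC : p (⟨n, hn⟩ : Fin (Ntot φ)).castSucc = x
  · rw [if_pos hC]
    have hset : Finset.univ.filter (fun j : Fin (Ntot φ) => j.1 < n+1 ∧ p j.castSucc = x)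
        = insert ⟨n, hn⟩ (Finset.univ.filter
          (fun j : Fin (Ntot φ) => j.1 < n ∧ p j.castSucc = x)) := by
      ext j
      simp only [Finset.mem_filter, Finset.mem_insert, Finset.mem_univ, true_and]
      constructor
      · rintro ⟨h1, h2⟩
        by_cases hj : j.1 = n
        · exact Or.inl (Fin.ext hj)
        · exact Or.inr ⟨by omega, h2⟩
      · rintro (rfl | ⟨h1, h2⟩)
        · exact ⟨by simp, hC⟩
        · exact ⟨by omega, h2⟩
    rw [hset, Finset.card_insert_of_notMem (by simp)]
  · rw [if_neg hC, add_zero]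
    congr 1
    apply Finset.filter_congr
    intro j _
    constructor
    · rintro ⟨h1, h2⟩
      refine ⟨?_, h2⟩
      by_cases hj : j.1 = n
      · exfalso
        apply hC
        have hje : j = ⟨n, hn⟩ := Fin.ext hj
        rw [← hje]
        exact h2
      · omega
    · rintro ⟨h1, h2⟩; exact ⟨by omega, h2⟩

noncomputable def εmap (x : X) : {i : Fin (Ntot φ) // p i.castSucc = x} → Ox φ x :=
  fun i => ⟨p i.1.succ, ℓ (p i.1.succ) x ⟨i.1, rfl, i.2⟩⟩

include hpf in
lemma εmap_bij (x : X) : Function.Bijective (εmap φ ℓ x) := by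
  rw [Fintype.bijective_iff_injective_and_card]
  constructor
  · intro i j hij
    have hv := congrArg (fun e : Ox φ x =>
      (((ℓ e.1 x).symm e.2 : {i : Fin (Ntot φ) // _}) : Fin (Ntot φ)).1) hij
    have key : ∀ (e : Ox φ x) (k : {i : Fin (Ntot φ) // p i.castSucc = x}),
        e = εmap φ ℓ x k → ((ℓ e.1 x).symm e.2).1 = k.1 := by
      rintro e k rfl
      exact congrArg Subtype.val ((ℓ (p k.1.succ) x).symm_apply_apply ⟨k.1, rfl, k.2⟩)
    exact Subtype.ext ((key _ i rfl).symm.trans (key _ j hij))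
  · rw [Fintype.card_subtype, card_Dfin φ hpf x, card_Ox]

noncomputable def rankF (x : X) : {i : Fin (Ntot φ) // p i.castSucc = x} → Fin (dout φ x) :=
  fun i => ⟨cntp φ (p := p) i.1.1 x, cntp_lt φ hpf i.1 i.2⟩

include hpf in
lemma rankF_bij (x : X) : Function.Bijective (rankF φ hpf x) := by
  rw [Fintype.bijective_iff_injective_and_card]
  constructor
  · intro i j hij
    have hv : cntp φ (p := p) i.1.1 x = cntp φ (p := p) j.1.1 x :=
      congrArg Fin.val hij
    rcases lt_trichotomy i.1.1 j.1.1 with h | h | h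
    · exact absurd hv (by have := cntp_mono_strict φ hpf i.1 i.2 h; omega)
    · exact Subtype.ext (Fin.ext h)
    · exact absurd hv (by have := cntp_mono_strict φ hpf j.1 j.2 h; omega)
  · rw [Fintype.card_subtype, card_Dfin φ hpf x, Fintype.card_fin]

noncomputable def ρF (x : X) : Ox φ x ≃ Fin (dout φ x) :=
  (Equiv.ofBijective _ (εmap_bij φ hpf ℓ x)).symm.trans
    (Equiv.ofBijective _ (rankF_bij φ hpf x))

lemma ρF_symm_app (x : X) (i : Fin (Ntot φ)) (hi : p i.castSucc = x)
    (w : Fin (dout φ x)) (hw : w.1 = cntp φ (p := p) i.1 x) :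
    (ρF φ hpf ℓ x).symm w = εmap φ ℓ x ⟨i, hi⟩ := by
  have hw2 : w = rankF φ hpf x ⟨i, hi⟩ := Fin.ext hw
  rw [ρF, Equiv.symm_trans_apply, Equiv.symm_symm, hw2]
  have : (Equiv.ofBijective _ (rankF_bij φ hpf x)).symm (rankF φ hpf x ⟨i, hi⟩)
      = ⟨i, hi⟩ := by
    rw [show rankF φ hpf x ⟨i, hi⟩ =
      (Equiv.ofBijective _ (rankF_bij φ hpf x)) ⟨i, hi⟩ from rfl,
      Equiv.symm_apply_apply]
  rw [this]
  rfl



variable (hp0 : p 0 = xinit) (hpl : p (Fin.last (Ntot φ)) = xfin)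
variable (hconn : ∀ a b : X, Relation.ReflTransGen (fun u v => 0 < φ u v + φ v u) a b)

include hpf hpl hconn in
lemma visited (x : X) (hx : x ≠ xfin) : ∃ i : Fin (Ntot φ), p i.castSucc = x := by
  rcases (hconn x xfin).cases_head with h | ⟨y, hy, _⟩
  · exact absurd h hx
  · by_cases h1 : 0 < φ y x
    · have hfl := hpf y x
      rw [flux] at hfl
      have hne0 : (Finset.univ.filter
          (fun i : Fin (Ntot φ) => p i.succ = y ∧ p i.castSucc = x)).Nonempty := by
        rw [← Finset.card_pos, hfl]; exact h1
      obtain ⟨i, hi⟩ := hne0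
      rw [Finset.mem_filter] at hi
      exact ⟨i, hi.2.2⟩
    · have h2 : 0 < φ x y := by omega
      have hfl := hpf x y
      rw [flux] at hfl
      have hne0 : (Finset.univ.filter
          (fun i : Fin (Ntot φ) => p i.succ = x ∧ p i.castSucc = y)).Nonempty := by
        rw [← Finset.card_pos, hfl]; exact h2
      obtain ⟨i, hi⟩ := hne0
      rw [Finset.mem_filter] at hi
      have hsucc : p i.succ = x := hi.2.1
      have hlt : i.1 + 1 < Ntot φ := by
        rcases Nat.lt_or_ge (i.1 + 1) (Ntot φ) with h | h
        · exact h
        · exfalso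
          have hi2 : i.1 + 1 = Ntot φ := by have := i.2; omega
          have : i.succ = Fin.last (Ntot φ) := Fin.ext (by simp [hi2])
          rw [this, hpl] at hsucc
          exact hx hsucc.symm
      refine ⟨⟨i.1 + 1, hlt⟩, ?_⟩
      have : (⟨i.1 + 1, hlt⟩ : Fin (Ntot φ)).castSucc = i.succ :=
        Fin.ext (by simp)
      rw [this]
      exact hsucc

include hpf in
lemma cnt_max (x : X)
    (hne0 : (Finset.univ.filter (fun j : Fin (Ntot φ) => p j.castSucc = x)).Nonempty) :
    cntp φ (p := p)
      (((Finset.univ.filter (fun j : Fin (Ntot φ) => p j.castSucc = x)).max' hne0) : Fin (Ntot φ)).1 x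
      = dout φ x - 1 := by
  set D := Finset.univ.filter (fun j : Fin (Ntot φ) => p j.castSucc = x) with hD
  set M := D.max' hne0 with hM
  have hset : Finset.univ.filter (fun j : Fin (Ntot φ) => j.1 < M.1 ∧ p j.castSucc = x)
      = D.erase M := by
    ext j
    rw [Finset.mem_filter, Finset.mem_erase, hD, Finset.mem_filter]
    constructor
    · rintro ⟨_, h1, h2⟩
      exact ⟨by intro hje; rw [hje] at h1; omega, Finset.mem_univ j, h2⟩
    · rintro ⟨h1, _, h2⟩
      have hle : j ≤ M := Finset.le_max' D j (by rw [hD, Finset.mem_filter]; exact ⟨Finset.mem_univ j, h2⟩)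
      refine ⟨Finset.mem_univ j, ?_, h2⟩
      have : j.1 ≠ M.1 := fun hv => h1 (Fin.ext hv)
      have := Fin.le_def.1 hle
      omega
  rw [cntp, hset, Finset.card_erase_of_mem (Finset.max'_mem D hne0)]
  rw [show D.card = dout φ x from by rw [hD]; exact card_Dfin φ hpf x]

include hpf in
lemma par_eq (x : X) (hx : x ≠ xfin)
    (hne0 : (Finset.univ.filter (fun j : Fin (Ntot φ) => p j.castSucc = x)).Nonempty) :
    par φ (ρF φ hpf ℓ) xfin x =
      p (((Finset.univ.filter
        (fun j : Fin (Ntot φ) => p j.castSucc = x)).max' hne0)).succ := by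
  set M := (Finset.univ.filter (fun j : Fin (Ntot φ) => p j.castSucc = x)).max' hne0
  have hMmem := Finset.max'_mem _ hne0
  rw [Finset.mem_filter] at hMmem
  have hd0 : 0 < dout φ x := by
    rw [← card_Dfin φ hpf x]
    exact Finset.card_pos.2 hne0
  rw [par, if_neg hx, dif_pos hd0]
  rw [ρF_symm_app φ hpf ℓ x M hMmem.2 _ (by
    simp only []
    rw [cnt_max φ hpf x hne0])]
  rfl

include hpf hpl hconn in
lemma reachF : ∀ x, ∃ k, (par φ (ρF φ hpf ℓ) xfin)^[k] x = xfin := by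
  have main : ∀ k : ℕ, ∀ x : X, x ≠ xfin →
      ∀ hne0 : (Finset.univ.filter (fun j : Fin (Ntot φ) => p j.castSucc = x)).Nonempty,
      Ntot φ - (((Finset.univ.filter
        (fun j : Fin (Ntot φ) => p j.castSucc = x)).max' hne0)).1 ≤ k →
      ∃ n, (par φ (ρF φ hpf ℓ) xfin)^[n] x = xfin := by
    intro k
    induction k with
    | zero =>
      intro x hx hne0 hk
      exfalso
      have := (((Finset.univ.filter
        (fun j : Fin (Ntot φ) => p j.castSucc = x)).max' hne0)).2
      omega
    | succ k ih =>
      intro x hx hne0 hk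
      set M := (Finset.univ.filter (fun j : Fin (Ntot φ) => p j.castSucc = x)).max' hne0 with hMdef
      have hpar := par_eq φ xfin hpf ℓ x hx hne0
      by_cases hy : p M.succ = xfin
      · exact ⟨1, by rw [Function.iterate_one, hpar, hy]⟩
      · have hlt : M.1 + 1 < Ntot φ := by
          rcases Nat.lt_or_ge (M.1 + 1) (Ntot φ) with h | h
          · exact h
          · exfalso
            have hM2 : M.1 + 1 = Ntot φ := by have := M.2; omega
            have : M.succ = Fin.last (Ntot φ) := Fin.ext (by simp [hM2])
            rw [this, hpl] at hy
            exact hy rfl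
        have hjmem : (⟨M.1 + 1, hlt⟩ : Fin (Ntot φ)) ∈
            Finset.univ.filter (fun j : Fin (Ntot φ) => p j.castSucc = p M.succ) := by
          rw [Finset.mem_filter]
          refine ⟨Finset.mem_univ _, ?_⟩
          rw [show ((⟨M.1 + 1, hlt⟩ : Fin (Ntot φ)).castSucc) = M.succ from
            Fin.ext (by simp)]
        have hne0y : (Finset.univ.filter
            (fun j : Fin (Ntot φ) => p j.castSucc = p M.succ)).Nonempty := ⟨_, hjmem⟩
        set My := (Finset.univ.filter
          (fun j : Fin (Ntot φ) => p j.castSucc = p M.succ)).max' hne0y with hMydef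
        have hMyv : M.1 + 1 ≤ My.1 := by
          have h := Finset.le_max' _ _ hjmem
          have h2 := Fin.le_def.1 h
          simpa using h2
        obtain ⟨n, hn⟩ := ih (p M.succ) hy hne0y (by omega)
        exact ⟨n + 1, by rw [Function.iterate_succ_apply, hpar, hn]⟩
  intro x
  by_cases hx : x = xfin
  · exact ⟨0, hx⟩
  · have hne0 : (Finset.univ.filter
        (fun j : Fin (Ntot φ) => p j.castSucc = x)).Nonempty := by
      obtain ⟨i, hi⟩ := visited φ xfin hpf hpl hconn x hx
      exact ⟨i, by rw [Finset.mem_filter]; exact ⟨Finset.mem_univ i, hi⟩⟩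
    exact main (Ntot φ) x hx hne0 (by omega)

include hpf hp0 in
lemma walk_eq (n : ℕ) (hn : n ≤ Ntot φ) :
    (gs φ (ρF φ hpf ℓ) xinit n).1 = p ⟨n, by omega⟩ ∧
    ∀ x, (gs φ (ρF φ hpf ℓ) xinit n).2 x = cntp φ (p := p) n x := by
  induction n with
  | zero =>
    constructor
    · rw [gs_zero, hp0.symm]
      congr 1
    · intro x
      rw [gs_zero, cntp]
      simp
  | succ n ih =>
    obtain ⟨ihv, ihu⟩ := ih (by omega)
    have hnlt : n < Ntot φ := by omega
    have hvp : (gs φ (ρF φ hpf ℓ) xinit n).1 =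
        p (⟨n, hnlt⟩ : Fin (Ntot φ)).castSucc := by
      rw [ihv]
      congr 1
    have hns : (gs φ (ρF φ hpf ℓ) xinit n).2 (gs φ (ρF φ hpf ℓ) xinit n).1 <
        dout φ (gs φ (ρF φ hpf ℓ) xinit n).1 := by
      rw [ihu]
      exact cntp_lt φ hpf ⟨n, hnlt⟩ hvp.symm
    constructor
    · rw [v_succ φ (ρF φ hpf ℓ) xinit n hns]
      rw [ρF_symm_app φ hpf ℓ (gs φ (ρF φ hpf ℓ) xinit n).1 ⟨n, hnlt⟩ hvp.symm _
        (by exact ihu _)]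
      show p (⟨n, hnlt⟩ : Fin (Ntot φ)).succ = _
      congr 1
    · intro x
      rw [cntp_succ φ n hnlt x]
      by_cases hx : x = (gs φ (ρF φ hpf ℓ) xinit n).1
      · rw [hx, u_succ_self φ (ρF φ hpf ℓ) xinit n hns, ihu, if_pos hvp.symm]
      · rw [u_succ_other φ (ρF φ hpf ℓ) xinit n x hns hx, ihu x,
          if_neg (fun hh => hx (hvp.trans hh).symm), add_zero]

include hpf hp0 hpl hconn hq hne in
lemma ar_eqF (i : Fin (Ntot φ)) :
    ar φ (ρF φ hpf ℓ) xinit xfin hq hne (reachF φ xfin hpf ℓ hpl hconn) i =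
      ⟨p i.castSucc, εmap φ ℓ (p i.castSucc) ⟨i, rfl⟩⟩ := by
  obtain ⟨hv, hu⟩ := walk_eq φ xinit hpf ℓ hp0 i.1 (by omega)
  have hv2 : (gs φ (ρF φ hpf ℓ) xinit i.1).1 = p i.castSucc := by
    rw [hv]; congr 1
  rw [ar]
  have hsymm := ρF_symm_app φ hpf ℓ (gs φ (ρF φ hpf ℓ) xinit i.1).1 i hv2.symm
    ⟨(gs φ (ρF φ hpf ℓ) xinit i.1).2 (gs φ (ρF φ hpf ℓ) xinit i.1).1,
      notstuck φ (ρF φ hpf ℓ) xinit xfin hq hne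
        (reachF φ xfin hpf ℓ hpl hconn) i.1 i.2⟩
    (by exact hu _)
  rw [hsymm]
  have hgen : ∀ (z z' : X) (hz : p i.castSucc = z) (hz' : p i.castSucc = z'),
      (⟨z, εmap φ ℓ z ⟨i, hz⟩⟩ : Σ x : X, Ox φ x) = ⟨z', εmap φ ℓ z' ⟨i, hz'⟩⟩ := by
    intro z z' hz hz'
    subst hz; subst hz'; rfl
  exact hgen _ _ hv2.symm rfl

include hpf hp0 hpl hconn hq hne in
lemma occ_val (a b : X) (i : Fin (Ntot φ))
    (hi : wp φ (ρF φ hpf ℓ) xinit i.succ = a ∧ wp φ (ρF φ hpf ℓ) xinit i.castSucc = b)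
    (hi' : p i.succ = a ∧ p i.castSucc = b) :
    occEquiv φ (ρF φ hpf ℓ) xinit xfin hq hne
      (reachF φ xfin hpf ℓ hpl hconn) a b ⟨i, hi⟩ = ℓ a b ⟨i, hi'⟩ := by
  obtain ⟨h1, h2⟩ := hi'
  subst h1; subst h2
  have har := ar_eqF φ xinit xfin hq hne hpf ℓ hp0 hpl hconn i
  have hsub : (⟨ar φ (ρF φ hpf ℓ) xinit xfin hq hne
        (reachF φ xfin hpf ℓ hpl hconn) i,
        (occ_cond φ (ρF φ hpf ℓ) xinit xfin hq hne
          (reachF φ xfin hpf ℓ hpl hconn) (p i.succ) (p i.castSucc) i).1 hi⟩ :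
      {e : Σ x : X, Ox φ x // e.1 = p i.castSucc ∧ e.2.1 = p i.succ}) =
      ⟨⟨p i.castSucc, εmap φ ℓ (p i.castSucc) ⟨i, rfl⟩⟩, rfl, rfl⟩ :=
    Subtype.ext har
  show (fib' φ _ _) ((sigmaFib φ _ _) ⟨ar φ (ρF φ hpf ℓ) xinit xfin hq hne
    (reachF φ xfin hpf ℓ hpl hconn) i, _⟩) = _
  rw [hsub]
  rfl

lemma SS_ext (s t : SS φ xinit xfin) (h1 : s.1.1 = t.1.1)
    (h2 : ∀ (a b : X) (i : Fin (Ntot φ)) (hi : s.1.1 i.succ = a ∧ s.1.1 i.castSucc = b)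
      (hi' : t.1.1 i.succ = a ∧ t.1.1 i.castSucc = b),
      s.2 a b ⟨i, hi⟩ = t.2 a b ⟨i, hi'⟩) : s = t := by
  obtain ⟨⟨p1, q1⟩, l1⟩ := s
  obtain ⟨⟨p2, q2⟩, l2⟩ := t
  dsimp only at h1 h2
  subst h1
  have hl : l1 = l2 := by
    funext a b
    apply Equiv.ext
    rintro ⟨i, hi⟩
    exact h2 a b i hi hi
  subst hl
  rfl
end Forward

include hq hne in
lemma gmap_surj
    (hconn : ∀ a b : X, Relation.ReflTransGen (fun u v => 0 < φ u v + φ v u) a b) :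
    Function.Surjective (Gmap φ xinit xfin hq hne) := by
  rintro ⟨⟨p, h0, hl, hf⟩, ℓ⟩
  refine ⟨⟨ρF φ hf ℓ, reachF φ xfin hf ℓ hl hconn⟩, ?_⟩
  apply SS_ext
  · show wp φ (ρF φ hf ℓ) xinit = p
    funext i
    have := (walk_eq φ xinit hf ℓ h0 i.1 (by omega)).1
    rw [wp]
    rw [this]
  · intro a b i hi hi'
    exact occ_val φ xinit xfin hq hne hf ℓ h0 hl hconn a b i hi hi'

lemma card_equiv_fin {α : Type*} [Fintype α] {n : ℕ} (h : Fintype.card α = n) :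
    Nat.card (α ≃ Fin n) = n.factorial := by
  rw [Nat.card_eq_fintype_card, Fintype.card_equiv (Fintype.equivFinOfCardEq h), h]

lemma card_equiv_fixed {α : Type*} [Fintype α] {m : ℕ} (h : Fintype.card α = m)
    (a0 : α) (i0 : Fin m) :
    Nat.card {e : α ≃ Fin m // e a0 = i0} = (m - 1).factorial := by
  have s1 : {e : α ≃ Fin m // e a0 = i0} ≃
      {e : Option {b : α // b ≠ a0} ≃ Fin m // e none = i0} := by
    refine Equiv.subtypeEquiv
      (Equiv.equivCongr (Equiv.optionSubtypeNe a0) (Equiv.refl _)).symm (fun e => ?_)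
    simp [Equiv.equivCongr]
  have s2 := Equiv.optionSubtype (α := {b : α // b ≠ a0}) i0
  have hcard : Fintype.card {b : α // b ≠ a0} = m - 1 := by
    simp [Fintype.card_subtype_compl, h]
  have hcard2 : Fintype.card {y : Fin m // y ≠ i0} = m - 1 := by
    simp [Fintype.card_subtype_compl]
  rw [Nat.card_congr (s1.trans s2), Nat.card_eq_fintype_card,
    Fintype.card_equiv (Fintype.equivOfCardEq (by rw [hcard, hcard2])), hcard]

lemma card_equiv_mem {α : Type*} [Fintype α] {m : ℕ} (h : Fintype.card α = m)
    (P : α → Prop) (i0 : Fin m) :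
    Nat.card {e : α ≃ Fin m // P (e.symm i0)} =
      Nat.card {a : α // P a} * (m - 1).factorial := by
  have s1 := Equiv.sigmaFiberEquiv
    (fun e' : {e : α ≃ Fin m // P (e.symm i0)} => (⟨e'.1.symm i0, e'.2⟩ : {a : α // P a}))
  have s2 : ∀ a : {a : α // P a},
      {e' : {e : α ≃ Fin m // P (e.symm i0)} //
        (⟨e'.1.symm i0, e'.2⟩ : {a : α // P a}) = a} ≃
      {e : α ≃ Fin m // e.symm i0 = a.1} := fun a =>
    { toFun := fun e' => ⟨e'.1.1, congrArg Subtype.val e'.2⟩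
      invFun := fun e => ⟨⟨e.1, by rw [e.2]; exact a.2⟩, Subtype.ext e.2⟩
      left_inv := fun e' => Subtype.ext (Subtype.ext rfl)
      right_inv := fun e => Subtype.ext rfl }
  rw [Nat.card_congr s1.symm, Nat.card_eq_fintype_card, Fintype.card_sigma]
  simp_rw [fun a => Fintype.card_congr (s2 a)]
  have : ∀ a : {a : α // P a}, Fintype.card {e : α ≃ Fin m // e.symm i0 = a.1}
      = (m - 1).factorial := by
    intro a
    have : {e : α ≃ Fin m // e.symm i0 = a.1} ≃ {e : α ≃ Fin m // e a.1 = i0} :=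
      Equiv.subtypeEquiv (Equiv.refl _) (fun e => (Equiv.symm_apply_eq e).trans eq_comm)
    rw [Fintype.card_congr this, ← Nat.card_eq_fintype_card, card_equiv_fixed h]
  simp only [this, Finset.sum_const, Finset.card_univ, smul_eq_mul,
    ← Nat.card_eq_fintype_card]


lemma card_SS : Nat.card (SS φ xinit xfin) =
    Nat.card (AS φ xinit xfin) * ∏ a, ∏ b, (φ a b).factorial := by
  rw [show SS φ xinit xfin = (Σ p : AS φ xinit xfin, ∀ a b : X,
    ({i : Fin (Ntot φ) // p.1 i.succ = a ∧ p.1 i.castSucc = b} ≃ Fin (φ a b)))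
    from rfl]
  rw [Nat.card_eq_fintype_card, Fintype.card_sigma]
  have hterm : ∀ pp : AS φ xinit xfin,
      Fintype.card (∀ a b : X,
        ({i : Fin (Ntot φ) // pp.1 i.succ = a ∧ pp.1 i.castSucc = b} ≃ Fin (φ a b)))
      = ∏ a, ∏ b, (φ a b).factorial := by
    intro pp
    rw [← Nat.card_eq_fintype_card, Nat.card_pi]
    apply Finset.prod_congr rfl
    intro a _
    rw [Nat.card_pi]
    apply Finset.prod_congr rfl
    intro b _
    apply card_equiv_fin
    rw [Fintype.card_subtype]
    exact pp.2.2.2 a b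
  rw [Finset.sum_congr rfl (fun pp _ => hterm pp), Finset.sum_const,
    Finset.card_univ, smul_eq_mul, Nat.card_eq_fintype_card]

noncomputable def parc (x : X) (e : Ox φ x ≃ Fin (dout φ x)) : X :=
  if x = xfin then xfin
  else if h : 0 < dout φ x then (e.symm ⟨dout φ x - 1, by omega⟩).1 else x

lemma par_eq_parc (ρ : ∀ x : X, Ox φ x ≃ Fin (dout φ x)) (x : X) :
    par φ ρ xfin x = parc φ xfin x (ρ x) := rfl

lemma card_fiber_x (t : X → X) (hreach : ∀ x, ∃ n, t^[n] x = xfin) (x : X)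
    (hx : x ≠ xfin) :
    Nat.card {e : Ox φ x ≃ Fin (dout φ x) // parc φ xfin x e = t x} =
      φ (t x) x * (dout φ x - 1).factorial := by
  by_cases hd : 0 < dout φ x
  · rw [Nat.card_congr (Equiv.subtypeEquivRight (q := fun e :
      Ox φ x ≃ Fin (dout φ x) => (e.symm ⟨dout φ x - 1, by omega⟩).1 = t x)
      (fun e => by rw [parc, if_neg hx, dif_pos hd]))]
    rw [card_equiv_mem (card_Ox φ x) (fun o : Ox φ x => o.1 = t x)
      ⟨dout φ x - 1, by omega⟩]
    rw [Nat.card_congr (fib' φ x (t x)), Nat.card_eq_fintype_card,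
      Fintype.card_fin]
  · have hd0 : dout φ x = 0 := by omega
    have htx : t x ≠ x := by
      intro h
      obtain ⟨n, hn⟩ := hreach x
      rw [Function.iterate_fixed h n] at hn
      exact hx hn
    have hemp : IsEmpty {e : Ox φ x ≃ Fin (dout φ x) // parc φ xfin x e = t x} := by
      refine ⟨fun e => ?_⟩
      have hp : parc φ xfin x e.1 = x := by rw [parc, if_neg hx, dif_neg hd]
      exact htx (e.2.symm.trans hp)
    rw [Nat.card_of_isEmpty]
    have hphi : φ (t x) x = 0 := by
      have hle : φ (t x) x ≤ dout φ x := by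
        rw [dout]
        exact Finset.single_le_sum (f := fun y => φ y x)
          (fun y _ => Nat.zero_le _) (Finset.mem_univ (t x))
      omega
    rw [hphi, zero_mul]

lemma card_fiber_fin (t : X → X) (ht : t xfin = xfin) :
    Nat.card {e : Ox φ xfin ≃ Fin (dout φ xfin) // parc φ xfin xfin e = t xfin} =
      (dout φ xfin).factorial := by
  rw [Nat.card_congr (Equiv.subtypeUnivEquiv (fun e => by rw [parc, if_pos rfl, ht]))]
  exact card_equiv_fin (card_Ox φ xfin)

lemma card_US : Nat.card (US φ xfin) = treeCount φ xfin *
    ((∏ x ∈ Finset.univ.erase xfin, (dout φ x - 1).factorial) *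
      (dout φ xfin).factorial) := by
  rw [← Nat.card_congr (Equiv.sigmaFiberEquiv (fun r : US φ xfin => par φ r.1 xfin)),
    Nat.card_eq_fintype_card, Fintype.card_sigma]
  have hterm : ∀ t : X → X,
      Fintype.card {r : US φ xfin // par φ r.1 xfin = t} =
      (if (t xfin = xfin ∧ ∀ x : X, ∃ n : ℕ, t^[n] x = xfin) then
        ∏ x ∈ Finset.univ.erase xfin, φ (t x) x else 0) *
      ((∏ x ∈ Finset.univ.erase xfin, (dout φ x - 1).factorial) *
        (dout φ xfin).factorial) := by
    intro t
    by_cases hcond : (t xfin = xfin ∧ ∀ x : X, ∃ n : ℕ, t^[n] x = xfin)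
    · rw [if_pos hcond]
      have e2 : {r : US φ xfin // par φ r.1 xfin = t} ≃
          (∀ x : X, {e : Ox φ x ≃ Fin (dout φ x) // parc φ xfin x e = t x}) := by
        refine Equiv.trans ?_ (Equiv.subtypePiEquivPi)
        exact
          { toFun := fun r => ⟨r.1.1, fun x => congrFun r.2 x⟩
            invFun := fun ρ => ⟨⟨ρ.1, by
              intro x
              have hpar : par φ ρ.1 xfin = t := funext ρ.2
              rw [hpar]
              exact hcond.2 x⟩, funext ρ.2⟩
            left_inv := fun r => by
              apply Subtype.ext
              apply Subtype.ext
              rfl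
            right_inv := fun ρ => by
              apply Subtype.ext
              rfl }
      rw [← Nat.card_eq_fintype_card, Nat.card_congr e2, Nat.card_pi]
      rw [← Finset.prod_erase_mul _ _ (Finset.mem_univ xfin)]
      rw [card_fiber_fin φ xfin t hcond.1]
      rw [Finset.prod_congr rfl (fun x hxm =>
        card_fiber_x φ xfin t hcond.2 x (Finset.mem_erase.1 hxm).1)]
      rw [Finset.prod_mul_distrib]
      ring
    · rw [if_neg hcond, zero_mul]
      have hemp : IsEmpty {r : US φ xfin // par φ r.1 xfin = t} := by
        refine ⟨fun r => ?_⟩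
        apply hcond
        constructor
        · rw [← r.2]
          exact par_fin φ r.1.1 xfin
        · intro x
          obtain ⟨n, hn⟩ := r.1.2 x
          rw [r.2] at hn
          exact ⟨n, hn⟩
      exact Fintype.card_eq_zero
  rw [Finset.sum_congr rfl (fun t _ => hterm t), ← Finset.sum_mul, treeCount]
end Glue

lemma factorial_pred_succ (n : ℕ) : (n - 1 + 1).factorial = n.factorial := by
  cases n <;> rfl
end BEST


/-- generalized BEST theorem: the number of open Eulerian tours
(with distinguishable arrows) from `xinit` to `xfin` on a connected quasibalanced
digraph, i.e. the number of vertex paths traversing each arrow class `b → a` exactly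
`φ a b` times multiplied by the permutations `∏ (φ a b)!` of parallel arrows, equals
`T_{xfin} · ∏_x (d_out(x) - 1 + δ_{x,xfin})!`. -/
theorem best_theorem_quasibalanced {X : Type*} [Fintype X] [DecidableEq X]
    (φ : X → X → ℕ) (xinit xfin : X) (hne : xinit ≠ xfin)
    (hconn : ∀ a b : X, Relation.ReflTransGen (fun u v => 0 < φ u v + φ v u) a b)
    (hqb : ∀ a : X, (∑ y, (φ a y : ℤ)) - ∑ y, (φ y a : ℤ) =
      (if a = xfin then 1 else 0) - (if a = xinit then 1 else 0)) :
    Nat.card {p : Fin ((∑ a, ∑ b, φ a b) + 1) → X //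
        p 0 = xinit ∧ p (Fin.last _) = xfin ∧ ∀ a b, flux p a b = φ a b} *
      ∏ a, ∏ b, (φ a b).factorial =
    treeCount φ xfin *
      ∏ x, ((∑ y, φ y x) - 1 + if x = xfin then 1 else 0).factorial := by
  have hq : ∀ a : X, (BEST.din φ a : ℤ) - BEST.dout φ a =
      (if a = xfin then 1 else 0) - (if a = xinit then 1 else 0) := by
    intro a
    rw [BEST.din, BEST.dout]
    push_cast
    exact hqb a
  have hNt : (∑ a, ∑ b, φ a b) = BEST.Ntot φ := by
    simp only [BEST.Ntot, BEST.dout]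
    exact Finset.sum_comm
  rw [hNt]
  have hbij : Function.Bijective (BEST.Gmap φ xinit xfin hq hne) :=
    ⟨BEST.gmap_inj φ xinit xfin hq hne, BEST.gmap_surj φ xinit xfin hq hne hconn⟩
  have hcard : Nat.card (BEST.US φ xfin) = Nat.card (BEST.SS φ xinit xfin) :=
    Nat.card_eq_of_bijective _ hbij
  have h1 : Nat.card (BEST.AS φ xinit xfin) * ∏ a, ∏ b, (φ a b).factorial =
      treeCount φ xfin *
        ((∏ x ∈ Finset.univ.erase xfin, (BEST.dout φ x - 1).factorial) *
          (BEST.dout φ xfin).factorial) := by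
    rw [← BEST.card_SS, ← hcard, BEST.card_US]
  have h2 : ∏ x, ((∑ y, φ y x) - 1 + if x = xfin then 1 else 0).factorial =
      (∏ x ∈ Finset.univ.erase xfin, (BEST.dout φ x - 1).factorial) *
        (BEST.dout φ xfin).factorial := by
    rw [← Finset.prod_erase_mul _ _ (Finset.mem_univ xfin)]
    congr 1
    · apply Finset.prod_congr rfl
      intro x hx
      rw [if_neg (Finset.mem_erase.1 hx).1, add_zero]
      rfl
    · rw [if_pos rfl, BEST.factorial_pred_succ]
      rfl
  rw [← mul_assoc] at h1
  rw [h2, ← mul_assoc]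
  exact h1
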